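/- Let d, P, C, k ≥ 1 be integers with k ≤ d, let z ∈ ℝ^d, let q ∈ {1,…,d}, and let H ⊆ {1,…,d} be a set of k coordinates such that |z_i| ≥ |z_j| for all i ∈ H and j ∉ H. For the random count-mean sketch with parameters (P, C), define E_H = (1/P) Σ_{j∈H, j≠q} Σ_{p=1}^P s_p(j)s_p(q)·1[h_p(j)=h_p(q)]·z_j and E_T = (1/P) Σ_{j∉H, j≠q} Σ_{p=1}^P s_p(j)s_p(q)·1[h_p(j)=h_p(q)]·z_j, so that (SᵀSz)_q − z_q = E_H + E_T. Then: (i) P(E_H ≠ 0) ≤ Pk/C; (ii) E[E_T] = 0 and E[E_T²] ≤ ‖z_tail(k)‖²/(PC). -/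

import Mathlib

open MeasureTheory ProbabilityTheory
open scoped ENNReal NNReal

noncomputable section

/-- Uniform probability measure on a finite type. -/
def unifMeasure (α : Type*) [Fintype α] [MeasurableSpace α] : Measure α :=
  (Fintype.card α : ℝ≥0∞)⁻¹ • Measure.count

/-- Randomness of a count-mean sketch with parameters `(P, C)` on `ℝ^d`:
for each `p : Fin P` a hash function `h_p : Fin d → Fin C` and sign bits `s_p : Fin d → Bool`,
all mutually independent and uniform (hence jointly: the uniform measure on this type). -/
abbrev SketchSpace (d P C : ℕ) : Type :=
  (Fin P → Fin d → Fin C) × (Fin P → Fin d → Bool)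

/-- Sign associated to a boolean. -/
def sgn (b : Bool) : ℝ := if b then 1 else -1

/-- The count-mean sketch `S z ∈ ℝ^{P×C}`:
`(S z)_{(p,c)} = (1/√P) ∑ i, s_p(i)·1[h_p(i)=c]·z_i`. -/
def Sk {d P C : ℕ} (ω : SketchSpace d P C) (z : Fin d → ℝ) : Fin P × Fin C → ℝ :=
  fun pc => (Real.sqrt P)⁻¹ *
    ∑ i : Fin d, sgn (ω.2 pc.1 i) * (if ω.1 pc.1 i = pc.2 then (1 : ℝ) else 0) * z i

/-- `Sᵀ y ∈ ℝ^d`: `(Sᵀ y)_q = (1/√P) ∑ p, s_p(q)·y_{(p, h_p(q))}`. -/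
def SkT {d P C : ℕ} (ω : SketchSpace d P C) (y : Fin P × Fin C → ℝ) : Fin d → ℝ :=
  fun q => (Real.sqrt P)⁻¹ * ∑ p : Fin P, sgn (ω.2 p q) * y (p, ω.1 p q)

/-- Euclidean (ℓ₂) norm on `ℝ^d`. -/
def norm2 {d : ℕ} (z : Fin d → ℝ) : ℝ := Real.sqrt (∑ i, (z i) ^ 2)

/-- `w` has at most `k` nonzero coordinates. -/
def sparse {d : ℕ} (k : ℕ) (w : Fin d → ℝ) : Prop :=
  ∃ I : Finset (Fin d), I.card ≤ k ∧ ∀ i ∉ I, w i = 0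

/-- The tail norm `‖z_tail(k)‖`: the minimum of `‖z - w‖₂` over `k`-sparse `w`. -/
def tailNorm {d : ℕ} (k : ℕ) (z : Fin d → ℝ) : ℝ :=
  sInf {t : ℝ | ∃ w : Fin d → ℝ, sparse k w ∧ t = norm2 (fun i => z i - w i)}

/-- `w` is a top-`m` truncation of `v`: it keeps the entries of `v` on a set `I` of `m`
coordinates of largest absolute value and zeroes out the rest. -/
def IsTopTrunc {d : ℕ} (m : ℕ) (v w : Fin d → ℝ) : Prop :=
  ∃ I : Finset (Fin d), I.card = m ∧ (∀ i ∈ I, ∀ j ∉ I, |v j| ≤ |v i|) ∧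
    (∀ i ∈ I, w i = v i) ∧ ∀ i ∉ I, w i = 0

/-- Symmetric median: the midpoint of the `⌈R/2⌉`-th and `(⌊R/2⌋+1)`-th smallest entries. -/
def med {R : ℕ} (x : Fin R → ℝ) : ℝ :=
  if h : R = 0 then 0
  else (x (Tuple.sort x ⟨(R + 1) / 2 - 1, by omega⟩) + x (Tuple.sort x ⟨R / 2, by omega⟩)) / 2

/-- Randomness of a count-median-of-means sketch: `R` independent count-mean sketches. -/
abbrev MoMSpace (d P C R : ℕ) : Type := Fin R → SketchSpace d P C

/-- Median-of-means unsketching: `U(y)_q = med_r ((S^{(r)})ᵀ y^{(r)})_q`. -/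
def MoMU {d P C R : ℕ} (ω : MoMSpace d P C R) (y : Fin R → Fin P × Fin C → ℝ) : Fin d → ℝ :=
  fun q => med fun r => SkT (ω r) (y r) q


/-! ### Auxiliary lemmas -/

section UnifAux
variable {X : Type*} [Fintype X] [MeasurableSpace X] [MeasurableSingletonClass X]

lemma unif_apply (s : Set X) :
    unifMeasure X s = (Fintype.card X : ℝ≥0∞)⁻¹ * ((Set.toFinite s).toFinset.card : ℝ≥0∞) := by
  rw [unifMeasure, Measure.smul_apply, Measure.count_apply_finite s (Set.toFinite s)]
  rfl

lemma unif_univ_le : unifMeasure X Set.univ ≤ 1 := by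
  rw [unif_apply]
  rcases Nat.eq_zero_or_pos (Fintype.card X) with h | h
  · simp [h]
  · have : ((Set.toFinite (Set.univ : Set X)).toFinset.card : ℝ≥0∞) = Fintype.card X := by
      congr 1
      simp
    rw [this, ENNReal.inv_mul_cancel (by exact_mod_cast h.ne') (by simp)]

lemma unif_integral (f : X → ℝ) :
    ∫ ω, f ω ∂(unifMeasure X) = (Fintype.card X : ℝ)⁻¹ * ∑ ω, f ω := by
  haveI : IsFiniteMeasure (unifMeasure X) := by
    constructor
    exact lt_of_le_of_lt (unif_univ_le) (by simp)
  rw [integral_fintype (Integrable.of_finite)]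
  have h1 : ∀ x : X, unifMeasure X {x} = (Fintype.card X : ℝ≥0∞)⁻¹ := by
    intro x
    rw [unifMeasure, Measure.smul_apply, Measure.count_singleton, smul_eq_mul, mul_one]
  simp only [Measure.real, h1, smul_eq_mul, ← Finset.mul_sum]
  congr 1
  rw [ENNReal.toReal_inv]
  simp
end UnifAux

lemma sgn_not (b : Bool) : sgn (!b) = -sgn b := by cases b <;> simp [sgn]
lemma sgn_mul_self (b : Bool) : sgn b * sgn b = 1 := by cases b <;> simp [sgn]

section SketchAux
variable {d P C : ℕ}

/-- Flip the sign bit at `(p, j)`. -/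
def flipB (p : Fin P) (j : Fin d) (ω : SketchSpace d P C) : SketchSpace d P C :=
  (ω.1, Function.update ω.2 p (Function.update (ω.2 p) j (!(ω.2 p j))))

lemma flipB_fst (p : Fin P) (j : Fin d) (ω : SketchSpace d P C) : (flipB p j ω).1 = ω.1 := rfl

lemma flipB_snd_same (p : Fin P) (j : Fin d) (ω : SketchSpace d P C) :
    (flipB p j ω).2 p j = !(ω.2 p j) := by simp [flipB]

lemma flipB_snd_ne (p p' : Fin P) (j j' : Fin d) (ω : SketchSpace d P C)
    (h : p' ≠ p ∨ j' ≠ j) : (flipB p j ω).2 p' j' = ω.2 p' j' := by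
  rcases h with h | h
  · simp [flipB, Function.update_of_ne h]
  · rcases eq_or_ne p' p with rfl | hp
    · simp [flipB, Function.update_of_ne h]
    · simp [flipB, Function.update_of_ne hp]

lemma flipB_invol (p : Fin P) (j : Fin d) : Function.Involutive (flipB (C := C) p j) := by
  intro ω
  refine Prod.ext rfl ?_
  funext p' j'
  rcases eq_or_ne p' p with rfl | hp
  · rcases eq_or_ne j' j with rfl | hj
    · rw [flipB_snd_same, flipB_snd_same, Bool.not_not]
    · rw [flipB_snd_ne _ _ _ _ _ (Or.inr hj), flipB_snd_ne _ _ _ _ _ (Or.inr hj)]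
  · rw [flipB_snd_ne _ _ _ _ _ (Or.inl hp), flipB_snd_ne _ _ _ _ _ (Or.inl hp)]

lemma sum_flip_eq_zero (p : Fin P) (j : Fin d) (f : SketchSpace d P C → ℝ)
    (hf : ∀ ω, f (flipB p j ω) = -f ω) : ∑ ω, f ω = 0 := by
  have h := Equiv.sum_comp ((flipB_invol (C := C) p j).toPerm) f
  simp only [Function.Involutive.coe_toPerm] at h
  have h2 : ∑ ω, f (flipB (C := C) p j ω) = ∑ ω, -f ω :=
    Finset.sum_congr rfl fun ω _ => hf ω
  rw [h2, Finset.sum_neg_distrib] at h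
  linarith

/-- Modify the hash value at `(p, j)`. -/
def updH (p : Fin P) (j : Fin d) (v : Fin C) (ω : SketchSpace d P C) : SketchSpace d P C :=
  (Function.update ω.1 p (Function.update (ω.1 p) j v), ω.2)

lemma updH_same (p : Fin P) (j : Fin d) (v : Fin C) (ω : SketchSpace d P C) :
    (updH p j v ω).1 p j = v := by simp [updH]

lemma updH_ne (p p' : Fin P) (j j' : Fin d) (v : Fin C) (ω : SketchSpace d P C)
    (h : p' ≠ p ∨ j' ≠ j) : (updH p j v ω).1 p' j' = ω.1 p' j' := by
  rcases h with h | h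
  · simp [updH, Function.update_of_ne h]
  · rcases eq_or_ne p' p with rfl | hp
    · simp [updH, Function.update_of_ne h]
    · simp [updH, Function.update_of_ne hp]

lemma updH_comp (p : Fin P) (j : Fin d) (v w : Fin C) (ω : SketchSpace d P C) :
    updH p j v (updH p j w ω) = updH p j v ω := by
  refine Prod.ext ?_ rfl
  show Function.update _ p _ = _
  simp [updH, Function.update_idem, Function.update_self]

lemma updH_self (p : Fin P) (j : Fin d) (ω : SketchSpace d P C) :
    updH p j (ω.1 p j) ω = ω := by
  refine Prod.ext ?_ rfl
  show Function.update _ p _ = _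
  simp [updH, Function.update_eq_self]

variable [NeZero C]

lemma collision_card (p : Fin P) (j q : Fin d) (hjq : j ≠ q) :
    C * (Finset.univ.filter
      (fun ω : SketchSpace d P C => ω.1 p j = ω.1 p q)).card = Fintype.card (SketchSpace d P C) := by
  have key : ∀ c : Fin C,
      (Finset.univ.filter (fun ω : SketchSpace d P C => ω.1 p j - ω.1 p q = c)).card =
      (Finset.univ.filter (fun ω : SketchSpace d P C => ω.1 p j = ω.1 p q)).card := by
    intro c
    refine Finset.card_bij' (fun ω _ => updH p j (ω.1 p j - c) ω)
      (fun ω _ => updH p j (ω.1 p j + c) ω) ?_ ?_ ?_ ?_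
    · intro ω hω
      simp only [Finset.mem_filter, Finset.mem_univ, true_and] at hω ⊢
      rw [updH_same, updH_ne p p j q _ _ (Or.inr (Ne.symm hjq))]
      rw [sub_eq_iff_eq_add] at hω
      rw [hω]; abel
    · intro ω hω
      simp only [Finset.mem_filter, Finset.mem_univ, true_and] at hω ⊢
      rw [updH_same, updH_ne p p j q _ _ (Or.inr (Ne.symm hjq)), hω]
      abel
    · intro ω _
      show updH p j _ (updH p j _ ω) = ω
      rw [updH_same, updH_comp, sub_add_cancel, updH_self]
    · intro ω _
      show updH p j _ (updH p j _ ω) = ω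
      rw [updH_same, updH_comp, add_sub_cancel_right, updH_self]
  have part : Fintype.card (SketchSpace d P C) =
      ∑ c : Fin C, (Finset.univ.filter
        (fun ω : SketchSpace d P C => ω.1 p j - ω.1 p q = c)).card := by
    rw [← Finset.card_univ]
    exact Finset.card_eq_sum_card_fiberwise (fun ω _ => Finset.mem_univ _)
  rw [part]
  simp [key, Finset.sum_const, Finset.card_univ, mul_comm]

end SketchAux

lemma tail_sq_le {d k : ℕ} (z : Fin d → ℝ) (H : Finset (Fin d)) (hHcard : H.card = k)
    (hHtop : ∀ i ∈ H, ∀ j ∉ H, |z j| ≤ |z i|) :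
    ∑ i ∈ Hᶜ, z i ^ 2 ≤ tailNorm k z ^ 2 := by
  set B : ℝ := ∑ i ∈ Hᶜ, z i ^ 2 with hB
  have hB0 : 0 ≤ B := Finset.sum_nonneg fun i _ => sq_nonneg _
  have hne : {t : ℝ | ∃ w : Fin d → ℝ, sparse k w ∧ t = norm2 (fun i => z i - w i)}.Nonempty :=
    ⟨norm2 (fun i => z i - 0), ⟨0, ⟨∅, by simp⟩, rfl⟩⟩
  have hlb : ∀ t ∈ {t : ℝ | ∃ w : Fin d → ℝ, sparse k w ∧ t = norm2 (fun i => z i - w i)},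
      Real.sqrt B ≤ t := by
    rintro t ⟨w, ⟨I, hIcard, hI0⟩, rfl⟩
    rw [norm2]
    apply Real.sqrt_le_sqrt
    have h1 : ∑ i ∈ Iᶜ, z i ^ 2 ≤ ∑ i, (z i - w i) ^ 2 := by
      calc ∑ i ∈ Iᶜ, z i ^ 2 = ∑ i ∈ Iᶜ, (z i - w i) ^ 2 := by
            refine Finset.sum_congr rfl fun i hi => ?_
            rw [hI0 i (Finset.mem_compl.mp hi), sub_zero]
        _ ≤ ∑ i, (z i - w i) ^ 2 :=
            Finset.sum_le_sum_of_subset_of_nonneg (Finset.subset_univ _)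
              (fun i _ _ => sq_nonneg _)
    refine le_trans ?_ h1
    have htot : ∀ s : Finset (Fin d), ∑ i ∈ s, z i ^ 2 + ∑ i ∈ sᶜ, z i ^ 2 = ∑ i, z i ^ 2 :=
      fun s => Finset.sum_add_sum_compl s _
    have hIH : ∑ i ∈ I, z i ^ 2 ≤ ∑ i ∈ H, z i ^ 2 := by
      have hcard : (I \ H).card ≤ (H \ I).card := by
        have h1 := Finset.card_inter_add_card_sdiff I H
        have h2 := Finset.card_inter_add_card_sdiff H I
        rw [Finset.inter_comm] at h2
        omega
      obtain ⟨J, hJsub, hJcard⟩ := Finset.exists_subset_card_eq hcard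
      have e : {x // x ∈ I \ H} ≃ {x // x ∈ J} := Finset.equivOfCardEq hJcard.symm
      have hd1 : ∑ i ∈ I \ H, z i ^ 2 ≤ ∑ i ∈ H \ I, z i ^ 2 := by
        calc ∑ i ∈ I \ H, z i ^ 2 = ∑ x : {x // x ∈ I \ H}, z x.1 ^ 2 :=
              (Finset.sum_coe_sort (I \ H) (fun a => z a ^ 2)).symm
          _ ≤ ∑ x : {x // x ∈ I \ H}, z (e x).1 ^ 2 := by
              refine Finset.sum_le_sum fun x _ => ?_
              have hxH : (x : Fin d) ∉ H := (Finset.mem_sdiff.mp x.2).2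
              have heH : ((e x) : Fin d) ∈ H :=
                (Finset.mem_sdiff.mp (hJsub (e x).2)).1
              have := hHtop _ heH _ hxH
              calc z x.1 ^ 2 = |z x.1| ^ 2 := (sq_abs _).symm
                _ ≤ |z (e x).1| ^ 2 := pow_le_pow_left₀ (abs_nonneg _) this 2
                _ = z (e x).1 ^ 2 := sq_abs _
          _ = ∑ y : {x // x ∈ J}, z y.1 ^ 2 := Equiv.sum_comp e (fun y : {x // x ∈ J} => z y.1 ^ 2)
          _ = ∑ y ∈ J, z y ^ 2 := Finset.sum_coe_sort J (fun a => z a ^ 2)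
          _ ≤ ∑ i ∈ H \ I, z i ^ 2 :=
              Finset.sum_le_sum_of_subset_of_nonneg hJsub fun i _ _ => sq_nonneg _
      calc ∑ i ∈ I, z i ^ 2 = ∑ i ∈ I ∩ H, z i ^ 2 + ∑ i ∈ I \ H, z i ^ 2 :=
            (Finset.sum_inter_add_sum_sdiff _ _ _).symm
        _ ≤ ∑ i ∈ I ∩ H, z i ^ 2 + ∑ i ∈ H \ I, z i ^ 2 := by linarith
        _ = ∑ i ∈ H ∩ I, z i ^ 2 + ∑ i ∈ H \ I, z i ^ 2 := by rw [Finset.inter_comm]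
        _ = ∑ i ∈ H, z i ^ 2 := Finset.sum_inter_add_sum_sdiff _ _ _
    have hH := htot H
    have hI := htot I
    have hBe : B = ∑ i ∈ Hᶜ, z i ^ 2 := hB
    linarith
  have h2 : Real.sqrt B ≤ tailNorm k z := le_csInf hne hlb
  have h3 : 0 ≤ Real.sqrt B := Real.sqrt_nonneg _
  have h4 : B = Real.sqrt B ^ 2 := (Real.sq_sqrt hB0).symm
  nlinarith

/-- decomposition of the per-coordinate error of a count-mean sketch
into a heavy part `E_H` and a tail part `E_T`, with `P(E_H ≠ 0) ≤ Pk/C`,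
`E[E_T] = 0` and `E[E_T²] ≤ ‖z_tail(k)‖²/(PC)`. -/
theorem count_mean_sketch_error_decomposition
    {d P C k : ℕ} (hd : 1 ≤ d) (hP : 1 ≤ P) (hC : 1 ≤ C) (hk : 1 ≤ k) (hkd : k ≤ d)
    (z : Fin d → ℝ) (q : Fin d)
    (H : Finset (Fin d)) (hHcard : H.card = k)
    (hHtop : ∀ i ∈ H, ∀ j ∉ H, |z j| ≤ |z i|)
    (EH ET : SketchSpace d P C → ℝ)
    (hEH : EH = fun ω => (P : ℝ)⁻¹ * ∑ j ∈ H.erase q, ∑ p : Fin P,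
      sgn (ω.2 p j) * sgn (ω.2 p q) * (if ω.1 p j = ω.1 p q then (1 : ℝ) else 0) * z j)
    (hET : ET = fun ω => (P : ℝ)⁻¹ * ∑ j ∈ Hᶜ.erase q, ∑ p : Fin P,
      sgn (ω.2 p j) * sgn (ω.2 p q) * (if ω.1 p j = ω.1 p q then (1 : ℝ) else 0) * z j) :
    (∀ ω : SketchSpace d P C, SkT ω (Sk ω z) q - z q = EH ω + ET ω) ∧
    unifMeasure (SketchSpace d P C) {ω | EH ω ≠ 0} ≤ ENNReal.ofReal ((P * k : ℝ) / C) ∧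
    ∫ ω, ET ω ∂(unifMeasure (SketchSpace d P C)) = 0 ∧
    ∫ ω, ET ω ^ 2 ∂(unifMeasure (SketchSpace d P C)) ≤ tailNorm k z ^ 2 / (P * C) := by
  classical
  haveI : NeZero C := ⟨by omega⟩
  have hPne : (P : ℝ) ≠ 0 := by positivity
  have hCne : (C : ℝ) ≠ 0 := by positivity
  have hNpos : 0 < Fintype.card (SketchSpace d P C) := Fintype.card_pos
  set N := Fintype.card (SketchSpace d P C) with hN
  have hNne : (N : ℝ) ≠ 0 := by positivity
  -- the elementary term
  set X : Fin d → Fin P → SketchSpace d P C → ℝ := fun j p ω =>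
    sgn (ω.2 p j) * sgn (ω.2 p q) * (if ω.1 p j = ω.1 p q then (1 : ℝ) else 0) * z j with hX
  -- flipping the bit (p,j) negates X j p and preserves X j' p' for (j',p') ≠ (j,p), j' ≠ q
  have hflipneg : ∀ (p : Fin P) (j : Fin d), j ≠ q →
      ∀ ω, X j p (flipB p j ω) = - X j p ω := by
    intro p j hjq ω
    simp only [hX]
    rw [flipB_snd_same, flipB_snd_ne p p j q ω (Or.inr (Ne.symm hjq)), flipB_fst, sgn_not]
    ring
  have hflipinv : ∀ (p p' : Fin P) (j j' : Fin d), j ≠ q → (j' ≠ j ∨ p' ≠ p) →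
      ∀ ω, X j' p' (flipB p j ω) = X j' p' ω := by
    intro p p' j j' hjq hne ω
    simp only [hX]
    rw [flipB_snd_ne p p' j j' ω (by tauto), flipB_snd_ne p p' j q ω (Or.inr (Ne.symm hjq)),
      flipB_fst]
  -- Part 1 : decomposition
  have part1 : ∀ ω : SketchSpace d P C, SkT ω (Sk ω z) q - z q = EH ω + ET ω := by
    intro ω
    have hss : (Real.sqrt P)⁻¹ * (Real.sqrt P)⁻¹ = (P : ℝ)⁻¹ := by
      rw [← mul_inv, Real.mul_self_sqrt (by positivity)]
    have e1 : SkT ω (Sk ω z) q = ∑ i : Fin d, ∑ p : Fin P, (P : ℝ)⁻¹ * X i p ω := by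
      rw [Finset.sum_comm]
      simp only [SkT, Sk, Finset.mul_sum, hX]
      refine Finset.sum_congr rfl fun p _ => Finset.sum_congr rfl fun i _ => ?_
      rw [← hss]
      ring
    have e2 : ∑ p : Fin P, (P : ℝ)⁻¹ * X q p ω = z q := by
      have : ∀ p : Fin P, X q p ω = z q := by
        intro p
        simp only [hX]
        norm_num [sgn_mul_self]
      simp only [this, Finset.sum_const, Finset.card_univ, Fintype.card_fin, nsmul_eq_mul]
      field_simp
    have hsplit : (Finset.univ.erase q) = (H.erase q) ∪ (Hᶜ.erase q) := by
      rw [← Finset.erase_union_distrib, Finset.union_compl]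
    have hdisj : Disjoint (H.erase q) (Hᶜ.erase q) :=
      Finset.disjoint_of_subset_left (Finset.erase_subset _ _)
        (Finset.disjoint_of_subset_right (Finset.erase_subset _ _) disjoint_compl_right)
    rw [e1, ← Finset.add_sum_erase _ _ (Finset.mem_univ q), e2, hsplit,
      Finset.sum_union hdisj, hEH, hET]
    simp only [Finset.mul_sum]
    ring
  refine ⟨part1, ?_, ?_, ?_⟩
  -- Part 2 : P(EH ≠ 0) ≤ P k / C
  · rw [unif_apply]
    set s : Set (SketchSpace d P C) := {ω | EH ω ≠ 0} with hs
    set B : Finset (SketchSpace d P C) := (H.erase q).biUnion (fun j =>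
      Finset.univ.biUnion (fun p : Fin P =>
        Finset.univ.filter (fun ω : SketchSpace d P C => ω.1 p j = ω.1 p q))) with hBdef
    have hsub : (Set.toFinite s).toFinset ⊆ B := by
      intro ω hω
      rw [Set.Finite.mem_toFinset] at hω
      by_contra hno
      apply hω
      simp only [hBdef, Finset.mem_biUnion, Finset.mem_univ, Finset.mem_filter, true_and,
        not_exists, exists_prop, not_and] at hno
      rw [hEH]
      refine mul_eq_zero_of_right _ (Finset.sum_eq_zero fun j hj => Finset.sum_eq_zero fun p _ => ?_)
      rw [if_neg (hno j hj p)]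
      ring
    -- direct: C * F.card ≤ k * P * N in ℕ
    have hnat : ((Set.toFinite s).toFinset.card) * C ≤ (P * k) * N := by
      have h1 : (Set.toFinite s).toFinset.card ≤
          ∑ j ∈ H.erase q, ∑ p : Fin P, (Finset.univ.filter
            (fun ω : SketchSpace d P C => ω.1 p j = ω.1 p q)).card := by
        refine le_trans (Finset.card_le_card hsub) ?_
        refine le_trans (Finset.card_biUnion_le) (Finset.sum_le_sum fun j _ => ?_)
        exact Finset.card_biUnion_le
      have h2 : (∑ j ∈ H.erase q, ∑ p : Fin P, (Finset.univ.filter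
            (fun ω : SketchSpace d P C => ω.1 p j = ω.1 p q)).card) * C ≤ (P * k) * N := by
        rw [Finset.sum_mul]
        have hterm : ∀ j ∈ H.erase q, (∑ p : Fin P, (Finset.univ.filter
            (fun ω : SketchSpace d P C => ω.1 p j = ω.1 p q)).card) * C = P * N := by
          intro j hj
          have hjq : j ≠ q := Finset.ne_of_mem_erase hj
          rw [Finset.sum_mul]
          have : ∀ p : Fin P, (Finset.univ.filter
              (fun ω : SketchSpace d P C => ω.1 p j = ω.1 p q)).card * C = N := by
            intro p
            rw [mul_comm]
            exact collision_card p j q hjq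
          simp only [this, Finset.sum_const, Finset.card_univ, Fintype.card_fin, smul_eq_mul]
        rw [Finset.sum_congr rfl hterm, Finset.sum_const, smul_eq_mul]
        have hcard : (H.erase q).card ≤ k := le_trans (Finset.card_erase_le) (le_of_eq hHcard)
        calc (H.erase q).card * (P * N) ≤ k * (P * N) :=
              Nat.mul_le_mul_right _ hcard
          _ = (P * k) * N := by ring
      calc (Set.toFinite s).toFinset.card * C ≤ (∑ j ∈ H.erase q, ∑ p : Fin P,
            (Finset.univ.filter (fun ω : SketchSpace d P C =>
              ω.1 p j = ω.1 p q)).card) * C := Nat.mul_le_mul_right _ h1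
        _ ≤ (P * k) * N := h2
    -- transfer to ℝ≥0∞
    have hrhs : ENNReal.ofReal ((P * k : ℝ) / C) = ((P * k : ℕ) : ℝ≥0∞) / (C : ℝ≥0∞) := by
      rw [ENNReal.ofReal_div_of_pos (by positivity)]
      congr 1
      · rw [show ((P : ℝ) * k) = ((P * k : ℕ) : ℝ) by push_cast; ring, ENNReal.ofReal_natCast]
      · rw [ENNReal.ofReal_natCast]
    rw [hrhs]
    have hN0 : (N : ℝ≥0∞) ≠ 0 := by exact_mod_cast hNpos.ne'
    have hNtop : (N : ℝ≥0∞) ≠ ⊤ := by simp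
    have hC0 : (C : ℝ≥0∞) ≠ 0 := by exact_mod_cast (by omega : C ≠ 0)
    have hCtop : (C : ℝ≥0∞) ≠ ⊤ := by simp
    rw [← ENNReal.div_eq_inv_mul, ENNReal.div_le_iff hN0 hNtop, div_eq_mul_inv, mul_right_comm,
      ← div_eq_mul_inv, ENNReal.le_div_iff_mul_le (Or.inl hC0) (Or.inl hCtop)]
    exact_mod_cast hnat
  -- Part 3 : E[ET] = 0
  · rw [unif_integral]
    have hsum : ∑ ω, ET ω = 0 := by
      calc ∑ ω, ET ω
          = ∑ ω, (P : ℝ)⁻¹ * ∑ j ∈ Hᶜ.erase q, ∑ p : Fin P, X j p ω := by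
            rw [hET]
        _ = (P : ℝ)⁻¹ * ∑ j ∈ Hᶜ.erase q, ∑ p : Fin P, ∑ ω, X j p ω := by
            rw [← Finset.mul_sum]
            congr 1
            rw [Finset.sum_comm]
            exact Finset.sum_congr rfl fun j _ => Finset.sum_comm
        _ = 0 := by
            refine mul_eq_zero_of_right _
              (Finset.sum_eq_zero fun j hj => Finset.sum_eq_zero fun p _ => ?_)
            exact sum_flip_eq_zero p j (X j p) (hflipneg p j (Finset.ne_of_mem_erase hj))
    rw [hsum, mul_zero]
  -- Part 4 : E[ET^2] ≤ tail^2 / (P C)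
  · rw [unif_integral]
    set T : Finset (Fin d) := Hᶜ.erase q with hT
    set TU : Finset (Fin d × Fin P) := T ×ˢ Finset.univ with hTU
    have hXsq : ∀ (j : Fin d) (p : Fin P) (ω : SketchSpace d P C),
        X j p ω * X j p ω = (if ω.1 p j = ω.1 p q then (1 : ℝ) else 0) * z j ^ 2 := by
      intro j p ω
      simp only [hX]
      split_ifs with h
      · have h1 := sgn_mul_self (ω.2 p j)
        have h2 := sgn_mul_self (ω.2 p q)
        linear_combination (sgn (ω.2 p q) * sgn (ω.2 p q) * z j ^ 2) * h1 + z j ^ 2 * h2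
      · ring
    have hcross : ∀ u ∈ TU, ∀ v ∈ TU, v ≠ u →
        ∑ ω, X u.1 u.2 ω * X v.1 v.2 ω = 0 := by
      intro u hu v hv hne
      have huq : u.1 ≠ q := Finset.ne_of_mem_erase (Finset.mem_product.mp hu).1
      refine sum_flip_eq_zero u.2 u.1 _ fun ω => ?_
      have h1 := hflipneg u.2 u.1 huq ω
      have h2 := hflipinv u.2 v.2 u.1 v.1 huq (by
        by_contra hc
        push_neg at hc
        exact hne (Prod.ext hc.1 hc.2)) ω
      rw [h1, h2]
      ring
    have hsum : ∑ ω, ET ω ^ 2 = (P : ℝ)⁻¹ * (P : ℝ)⁻¹ * ∑ u ∈ TU,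
        z u.1 ^ 2 * ((Finset.univ.filter (fun ω : SketchSpace d P C =>
          ω.1 u.2 u.1 = ω.1 u.2 q)).card : ℝ) := by
      have e0 : ∀ ω, ET ω ^ 2 = (P : ℝ)⁻¹ * (P : ℝ)⁻¹ *
          ∑ u ∈ TU, ∑ v ∈ TU, X u.1 u.2 ω * X v.1 v.2 ω := by
        intro ω
        have h3 : ∑ j ∈ T, ∑ p : Fin P, X j p ω = ∑ u ∈ TU, X u.1 u.2 ω :=
          (Finset.sum_product T Finset.univ (fun u : Fin d × Fin P => X u.1 u.2 ω)).symm
        have h4 : ET ω = (P : ℝ)⁻¹ * ∑ j ∈ T, ∑ p : Fin P, X j p ω := by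
          rw [hET]
        have h6 : (∑ u ∈ TU, X u.1 u.2 ω) ^ 2 =
            ∑ u ∈ TU, ∑ v ∈ TU, X u.1 u.2 ω * X v.1 v.2 ω := by
          rw [pow_two]
          exact Finset.sum_mul_sum _ _ _ _
        rw [h4, mul_pow, h3, h6]
        ring
      calc ∑ ω, ET ω ^ 2
          = ∑ ω, ((P : ℝ)⁻¹ * (P : ℝ)⁻¹ * ∑ u ∈ TU, ∑ v ∈ TU, X u.1 u.2 ω * X v.1 v.2 ω) :=
            Finset.sum_congr rfl fun ω _ => e0 ω
        _ = (P : ℝ)⁻¹ * (P : ℝ)⁻¹ * ∑ u ∈ TU, ∑ v ∈ TU, ∑ ω, X u.1 u.2 ω * X v.1 v.2 ω := by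
            rw [← Finset.mul_sum]
            congr 1
            rw [Finset.sum_comm]
            exact Finset.sum_congr rfl fun u _ => Finset.sum_comm
        _ = (P : ℝ)⁻¹ * (P : ℝ)⁻¹ * ∑ u ∈ TU, ∑ ω, X u.1 u.2 ω * X u.1 u.2 ω := by
            congr 1
            refine Finset.sum_congr rfl fun u hu => ?_
            exact Finset.sum_eq_single_of_mem u hu fun v hv hvu => hcross u hu v hv hvu
        _ = (P : ℝ)⁻¹ * (P : ℝ)⁻¹ * ∑ u ∈ TU,
            z u.1 ^ 2 * ((Finset.univ.filter (fun ω : SketchSpace d P C =>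
              ω.1 u.2 u.1 = ω.1 u.2 q)).card : ℝ) := by
            congr 1
            refine Finset.sum_congr rfl fun u hu => ?_
            rw [Finset.sum_congr rfl (fun ω _ => hXsq u.1 u.2 ω), ← Finset.sum_mul,
              Finset.sum_boole]
            ring
    have hcf : ∀ u ∈ TU, ((Finset.univ.filter (fun ω : SketchSpace d P C =>
        ω.1 u.2 u.1 = ω.1 u.2 q)).card : ℝ) = (N : ℝ) / C := by
      intro u hu
      have huq : u.1 ≠ q := Finset.ne_of_mem_erase (Finset.mem_product.mp hu).1
      have hr : (C : ℝ) * ((Finset.univ.filter (fun ω : SketchSpace d P C =>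
          ω.1 u.2 u.1 = ω.1 u.2 q)).card : ℝ) = (N : ℝ) := by
        exact_mod_cast congrArg (Nat.cast (R := ℝ)) (collision_card u.2 u.1 q huq)
      field_simp
      linarith
    have hfinal : (N : ℝ)⁻¹ * ∑ ω, ET ω ^ 2 = (∑ j ∈ T, z j ^ 2) / (P * C) := by
      rw [hsum, Finset.sum_congr rfl (fun u hu => by rw [hcf u hu]), ← Finset.sum_mul]
      have h5 : ∑ u ∈ TU, z u.1 ^ 2 = (P : ℝ) * ∑ j ∈ T, z j ^ 2 := by
        rw [hTU, Finset.sum_product _ _ (fun u : Fin d × Fin P => z u.1 ^ 2)]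
        simp only [Finset.sum_const, Finset.card_univ, Fintype.card_fin, nsmul_eq_mul]
        rw [← Finset.mul_sum]
      rw [h5]
      field_simp
    rw [hfinal]
    have hle : ∑ j ∈ T, z j ^ 2 ≤ tailNorm k z ^ 2 :=
      le_trans (Finset.sum_le_sum_of_subset_of_nonneg (Finset.erase_subset _ _)
        fun i _ _ => sq_nonneg _) (tail_sq_le z H hHcard hHtop)
    have hPC : (0 : ℝ) < (P : ℝ) * C := by positivity
    gcongr
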